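/- Let J be as given, and suppose that every edge of the coding graph E_J is non-negative and that E_J contains no non-positive cycles. If the labeled graph (E_J, E) is not left-synchronizing, then there exist two distinct cycles in E_J with the same E-label. -/

import Mathlib

/-- A finite directed multigraph. -/
structure FinGraph where
  V : Type
  E : Type
  fintV : Fintype V
  fintE : Fintype E
  src : E → V
  rng : E → V

variable {G : FinGraph}

/-- A finite path in the graph `G`: a source vertex together with a compatible
list of edges (a vertex is a path of length 0). -/
structure FPath (G : FinGraph) where
  source : G.V
  edges : List G.E
  head_src : ∀ e ∈ edges.head?, G.src e = source
  chain : edges.Chain' fun e f => G.rng e = G.src f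

/-- The range (terminal vertex) of a finite path. -/
def FPath.range (p : FPath G) : G.V :=
  p.edges.getLast?.elim p.source G.rng

/-- The length-0 path at a vertex. -/
def FPath.nil (G : FinGraph) (v : G.V) : FPath G :=
  ⟨v, [], by simp, List.isChain_nil⟩

/-- `p.Prefix q` : the path `p` is an initial segment of the path `q`. -/
def FPath.Prefix (p q : FPath G) : Prop :=
  p.source = q.source ∧ p.edges <+: q.edges

/-- The path obtained by removing the first edge (the tail `κ` of `ν = eκ`). -/
def FPath.tail (p : FPath G) : FPath G where
  source := p.edges.head?.elim p.source G.rng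
  edges := p.edges.tail
  head_src := by
    cases hp : p.edges with
    | nil => simp
    | cons a l =>
      have h := p.chain
      rw [hp] at h
      simp only [List.Chain', List.isChain_cons] at h
      intro e he
      simp only [hp, List.head?_cons, Option.elim, List.tail_cons] at he ⊢
      exact (h.1 e he).symm
  chain := p.chain.tail

/-- An infinite path in the graph `G`. -/
structure IPath (G : FinGraph) where
  edges : ℕ → G.E
  chain : ∀ i, G.rng (edges i) = G.src (edges (i + 1))

/-- The source vertex of an infinite path. -/
def IPath.source (p : IPath G) : G.V := G.src (p.edges 0)

/-- The cylinder set `Z(p)` of a finite path `p`: all infinite paths with prefix `p`. -/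
def cylinder (p : FPath G) : Set (IPath G) :=
  {q | q.source = p.source ∧ ∀ i, (h : i < p.edges.length) → q.edges i = p.edges.get ⟨i, h⟩}

/-- A finite collection `S` of finite paths is a partition of the path `ν`:
the cylinder sets are pairwise disjoint with union `Z(ν)`. -/
def IsPartitionOfPath (S : Set (FPath G)) (ν : FPath G) : Prop :=
  S.Finite ∧ (∀ p ∈ S, ∀ q ∈ S, p ≠ q → cylinder p ∩ cylinder q = ∅) ∧
    (⋃ p ∈ S, cylinder p) = cylinder ν

/-- A finite collection `S` of finite paths is a partition of the vertex `v`. -/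
def IsPartitionOf (S : Set (FPath G)) (v : G.V) : Prop :=
  IsPartitionOfPath S (FPath.nil G v)

/-- Standing assumptions: no sinks, no sources, every cycle has an exit. -/
structure Standing (G : FinGraph) : Prop where
  no_sinks : ∀ v : G.V, ∃ e, G.src e = v
  no_sources : ∀ v : G.V, ∃ e, G.rng e = v
  cycles_exit : ∀ p : FPath G, p.edges ≠ [] → p.range = p.source →
    ∃ e ∈ p.edges, ∃ f, f ≠ e ∧ G.src f = G.src e

/-- The combinatorial conditions making `u_J = Σ_{(μ,ν) ∈ J} S_μ S_ν^*` a unitary: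
`J` is finite, `s(μ) = s(ν)`, `r(μ) = r(ν)`, `|ν| ≥ 1` for all `(μ,ν) ∈ J`, and both
families of cylinder sets are pairwise disjoint with union all of `E^∞`. -/
structure IsUnitaryJ (G : FinGraph) (J : Set (FPath G × FPath G)) : Prop where
  finite : J.Finite
  src_eq : ∀ p ∈ J, (Prod.fst p).source = (Prod.snd p).source
  rng_eq : ∀ p ∈ J, FPath.range (Prod.fst p) = FPath.range (Prod.snd p)
  ne_nil : ∀ p ∈ J, (Prod.snd p).edges ≠ []
  disj₁ : ∀ p ∈ J, ∀ q ∈ J, p ≠ q → cylinder (Prod.fst p) ∩ cylinder (Prod.fst q) = ∅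
  union₁ : (⋃ p ∈ J, cylinder (Prod.fst p)) = Set.univ
  disj₂ : ∀ p ∈ J, ∀ q ∈ J, p ≠ q → cylinder (Prod.snd p) ∩ cylinder (Prod.snd q) = ∅
  union₂ : (⋃ p ∈ J, cylinder (Prod.snd p)) = Set.univ

/-- Adjacency in the coding graph `E_J`: there is an edge from `p = (μ₁, e₁ν₁)` to
`q = (μ₂, e₂ν₂)` iff the tail `ν₁` and `μ₂` are prefix-comparable
(the combinatorial content of `S_{ν₁}^* S_{μ₂} ≠ 0`). -/
def CGAdj (p q : FPath G × FPath G) : Prop :=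
  FPath.Prefix p.2.tail q.1 ∨ FPath.Prefix q.1 p.2.tail

/-- The degree `|μ₂| − |ν₁|` of the coding-graph edge from `p` to `q`. -/
def cgDeg (p q : FPath G × FPath G) : ℤ :=
  (q.1.edges.length : ℤ) - (p.2.tail.edges.length : ℤ)

/-- `IsAppend p q r` : the path `r` is the concatenation `p q`. -/
def IsAppend (p q r : FPath G) : Prop :=
  r.source = p.source ∧ q.source = p.range ∧ r.edges = p.edges ++ q.edges

/-- A finite path in the coding graph `E_J`, recorded by the (nonempty) list of
vertices of `J` it visits (a single vertex is a path of length 0). -/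
structure CGPath (G : FinGraph) (J : Set (FPath G × FPath G)) where
  verts : List (FPath G × FPath G)
  ne : verts ≠ []
  mem : ∀ v ∈ verts, v ∈ J
  adj : verts.Chain' CGAdj

/-- The `E`-label of a path in the coding graph: the list of distinguished first
edges `e` of the second coordinates of the vertices it visits. -/
def CGPath.elabel {J : Set (FPath G × FPath G)} (ω : CGPath G J) : List G.E :=
  ω.verts.filterMap fun v => v.2.edges.head?

/-- `IsLabelOf l γ` : `γ` is the `L_J`-label of the coding-graph path visiting the
vertices in the list `l` (all of whose edges are non-negative): the concatenation of
the `L_J`-labels of its edges, and the empty path at `r(μ)` for the length-0 path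
at a vertex `(μ, eν)`. -/
inductive IsLabelOf : List (FPath G × FPath G) → FPath G → Prop
  | single (p : FPath G × FPath G) (γ : FPath G) :
      γ.edges = [] → γ.source = FPath.range p.1 → IsLabelOf [p] γ
  | cons (p q : FPath G × FPath G) (rest : List (FPath G × FPath G)) (α γ δ : FPath G) :
      IsAppend p.2.tail α q.1 → IsLabelOf (q :: rest) γ → IsAppend α γ δ →
      IsLabelOf (p :: q :: rest) δ

/-- Every edge of the coding graph `E_J` is non-negative. -/
def AllEdgesNonneg (G : FinGraph) (J : Set (FPath G × FPath G)) : Prop :=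
  ∀ p ∈ J, ∀ q ∈ J, CGAdj p q → 0 ≤ cgDeg p q

/-- The coding graph `E_J` contains a non-positive cycle. -/
def HasNonposCycle (G : FinGraph) (J : Set (FPath G × FPath G)) : Prop :=
  ∃ ω : CGPath G J, 2 ≤ ω.verts.length ∧ ω.verts.getLast ω.ne = ω.verts.head ω.ne ∧
    ω.verts.Chain' fun p q => cgDeg p q ≤ 0

/-- All outgoing edges of the vertex `p` in the coding graph `E_J` are positive. -/
def AllOutPositive (G : FinGraph) (J : Set (FPath G × FPath G))
    (p : FPath G × FPath G) : Prop :=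
  ∀ q ∈ J, CGAdj p q → 0 < cgDeg p q

/-- `IsSnoc p f q` : the path `q` is `p` extended by the single edge `f`. -/
def IsSnoc (p : FPath G) (f : G.E) (q : FPath G) : Prop :=
  q.source = p.source ∧ q.edges = p.edges ++ [f]

/-- `IsSplitting G J p J'` : `J'` is the splitting of `J` at the vertex `p = (μ, eν)`,
i.e. `J' = (J ∖ {(μ,eν)}) ∪ {(μf, eνf) : f ∈ E¹, s(f) = r(μ)}`. -/
def IsSplitting (G : FinGraph) (J : Set (FPath G × FPath G)) (p : FPath G × FPath G)
    (J' : Set (FPath G × FPath G)) : Prop :=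
  p ∈ J ∧ ∀ q, q ∈ J' ↔ (q ∈ J ∧ q ≠ p) ∨
    ∃ f, G.src f = FPath.range p.1 ∧ IsSnoc p.1 f q.1 ∧ IsSnoc p.2 f q.2

/-- The set of negative edges of the coding graph `E_J`. -/
def negEdgeSet (G : FinGraph) (J : Set (FPath G × FPath G)) :
    Set ((FPath G × FPath G) × (FPath G × FPath G)) :=
  {e | e.1 ∈ J ∧ e.2 ∈ J ∧ CGAdj e.1 e.2 ∧ cgDeg e.1 e.2 < 0}

/-- `IsFinalNeg G J p q ω d` : the edge from `p` to `q` in `E_J` is a final negative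
edge with destination `d`, via the zero path `ω` from `q` to `d`; the height of the
edge is `ω.verts.length - 1`. -/
def IsFinalNeg (G : FinGraph) (J : Set (FPath G × FPath G))
    (p q : FPath G × FPath G) (ω : CGPath G J) (d : FPath G × FPath G) : Prop :=
  p ∈ J ∧ q ∈ J ∧ CGAdj p q ∧ cgDeg p q < 0 ∧
    ω.verts.head ω.ne = q ∧ ω.verts.getLast ω.ne = d ∧
    (ω.verts.Chain' fun a b => cgDeg a b = 0) ∧ AllOutPositive G J d

/-- `(E_J, E)` is left-synchronizing with delay `m` : any two paths of length `m`
(i.e. with `m+1` vertices) in `E_J` with the same `E`-label have the same source. -/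
def LeftSyncDelay (G : FinGraph) (J : Set (FPath G × FPath G)) (m : ℕ) : Prop :=
  ∀ ω ξ : CGPath G J, ω.verts.length = m + 1 → ξ.verts.length = m + 1 →
    ω.elabel = ξ.elabel → ω.verts.head ω.ne = ξ.verts.head ξ.ne

/-- An infinite path in the coding graph `E_J`. -/
structure CGIPath (G : FinGraph) (J : Set (FPath G × FPath G)) where
  verts : ℕ → FPath G × FPath G
  mem : ∀ i, verts i ∈ J
  adj : ∀ i, CGAdj (verts i) (verts (i + 1))

/-- The infinite `E`-label of an infinite coding-graph path is the infinite path `α`. -/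
def ELabelInf {J : Set (FPath G × FPath G)} (ω : CGIPath G J) (α : IPath G) : Prop :=
  ∀ i, (ω.verts i).2.edges.head? = some (α.edges i)

/-- A transducer with input alphabet `A`, output alphabet `B`, a finite state set,
an initial state and a transition function. -/
structure Transducer (A B : Type) where
  S : Type
  finS : Finite S
  init : S
  tr : S → A → S × List B

/-- The state sequence of a transducer on an infinite input word. -/
def Transducer.states {A B : Type} (T : Transducer A B) (α : ℕ → A) : ℕ → T.S
  | 0 => T.init
  | n + 1 => (T.tr (T.states α n) (α n)).1

/-- The `n`-th output block of a transducer on an infinite input word. -/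
def Transducer.outBlock {A B : Type} (T : Transducer A B) (α : ℕ → A) (n : ℕ) : List B :=
  (T.tr (T.states α n) (α n)).2

/-- The concatenation of the first `n` blocks of a sequence of finite words. -/
def joinUpTo {X : Type} (f : ℕ → List X) (n : ℕ) : List X :=
  ((List.range n).map f).flatten

/-- Two infinite concatenations of sequences of finite words are equal. -/
def StreamsEq {X : Type} (f g : ℕ → List X) : Prop :=
  (∀ n, ∃ m, joinUpTo f n <+: joinUpTo g m) ∧ ∀ n, ∃ m, joinUpTo g n <+: joinUpTo f m

/-- The type of edges of the coding graph `E_J`. -/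
def CGEdgeT (G : FinGraph) (J : Set (FPath G × FPath G)) : Type :=
  {e : (FPath G × FPath G) × (FPath G × FPath G) // e.1 ∈ J ∧ e.2 ∈ J ∧ CGAdj e.1 e.2}

/-- The sequence of edges of an infinite coding-graph path. -/
def CGIPath.edgeSeq {J : Set (FPath G × FPath G)} (ω : CGIPath G J) (i : ℕ) : CGEdgeT G J :=
  ⟨(ω.verts i, ω.verts (i + 1)), ω.mem i, ω.mem (i + 1), ω.adj i⟩

section Helper13

variable {G : FinGraph} {J : Set (FPath G × FPath G)}

private lemma map_eq_of_forall_isSome {α β : Type*} (f : α → Option β) :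
    ∀ l : List α, (∀ v ∈ l, (f v).isSome) → l.map f = (l.filterMap f).map some := by
  intro l h
  induction l with
  | nil => simp
  | cons a t ih =>
    obtain ⟨b, hb⟩ := Option.isSome_iff_exists.1 (h a (by simp))
    simp only [List.map_cons, List.filterMap_cons, hb, ih (fun v hv => h v (by simp [hv]))]

private noncomputable def extSeq (hG : Standing G) (l : List G.E) (hl : l ≠ []) : ℕ → G.E
  | 0 => l.head hl
  | n + 1 =>
    if h : n + 1 < l.length then l.get ⟨n + 1, h⟩
    else (hG.no_sinks (G.rng (extSeq hG l hl n))).choose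

private lemma extSeq_eq (hG : Standing G) (l : List G.E) (hl : l ≠ []) :
    ∀ i (h : i < l.length), extSeq hG l hl i = l.get ⟨i, h⟩
  | 0, h => (List.get_mk_zero h).symm
  | n + 1, h => by rw [extSeq, dif_pos h]

private lemma extSeq_chain (hG : Standing G) (p : FPath G) (hl : p.edges ≠ []) (i : ℕ) :
    G.rng (extSeq hG p.edges hl i) = G.src (extSeq hG p.edges hl (i + 1)) := by
  by_cases h : i + 1 < p.edges.length
  · rw [extSeq_eq hG _ hl i (by omega), extSeq, dif_pos h]
    exact List.isChain_iff_getElem.1 p.chain i (by omega)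
  · rw [show extSeq hG p.edges hl (i + 1) = _ from by rw [extSeq, dif_neg h]]
    exact ((hG.no_sinks (G.rng (extSeq hG p.edges hl i))).choose_spec).symm

private lemma cylinder_nonempty (hG : Standing G) (p : FPath G) (hp : p.edges ≠ []) :
    (cylinder p).Nonempty := by
  refine ⟨⟨extSeq hG p.edges hp, extSeq_chain hG p hp⟩, ?_, ?_⟩
  · show G.src (extSeq hG p.edges hp 0) = p.source
    have h0 : (0 : ℕ) < p.edges.length := List.length_pos_iff.2 hp
    rw [extSeq_eq hG _ hp 0 h0, List.get_mk_zero h0]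
    exact p.head_src _ (by rw [List.head?_eq_head hp]; rfl)
  · exact fun i h => extSeq_eq hG p.edges hp i h

private lemma cylinder_mono {p q : FPath G} (h : FPath.Prefix p q) :
    cylinder q ⊆ cylinder p := by
  rintro x ⟨hs, he⟩
  refine ⟨hs.trans h.1.symm, fun i hi => ?_⟩
  rw [he i (lt_of_lt_of_le hi h.2.length_le)]
  simp only [List.get_eq_getElem]
  exact (h.2.getElem hi).symm

private lemma tail_prefix_of_adj (hnn : AllEdgesNonneg G J) {p q : FPath G × FPath G}
    (hp : p ∈ J) (hq : q ∈ J) (hadj : CGAdj p q) : FPath.Prefix p.2.tail q.1 := by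
  rcases hadj with h | h
  · exact h
  · have hd := hnn p hp q hq (Or.inr h)
    have hlen : p.2.tail.edges.length ≤ q.1.edges.length := by
      unfold cgDeg at hd; omega
    have heq : q.1.edges = p.2.tail.edges := h.2.eq_of_length_le hlen
    exact ⟨h.1.symm, heq ▸ List.prefix_refl _⟩

private lemma eq_of_same_label_adj (hG : Standing G) (hJ : IsUnitaryJ G J)
    (hnn : AllEdgesNonneg G J) {p p' q : FPath G × FPath G}
    (hp : p ∈ J) (hp' : p' ∈ J) (hq : q ∈ J)
    (ha : CGAdj p q) (ha' : CGAdj p' q)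
    (hlab : p.2.edges.head? = p'.2.edges.head?) : p = p' := by
  by_contra hne
  have hne1 : p.2.edges ≠ [] := hJ.ne_nil p hp
  have hne2 : p'.2.edges ≠ [] := hJ.ne_nil p' hp'
  have h1 : FPath.Prefix p.2.tail q.1 := tail_prefix_of_adj hnn hp hq ha
  have h2 : FPath.Prefix p'.2.tail q.1 := tail_prefix_of_adj hnn hp' hq ha'
  have hcomp : p.2.edges.tail <+: p'.2.edges.tail ∨ p'.2.edges.tail <+: p.2.edges.tail :=
    List.prefix_or_prefix_of_prefix h1.2 h2.2
  -- heads are equal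
  have hhead : p.2.edges.head hne1 = p'.2.edges.head hne2 := by
    rw [List.head?_eq_head hne1, List.head?_eq_head hne2] at hlab
    exact Option.some.inj hlab
  have e1 : G.src (p.2.edges.head hne1) = p.2.source :=
    p.2.head_src _ (by rw [List.head?_eq_head hne1]; rfl)
  have e2 : G.src (p'.2.edges.head hne2) = p'.2.source :=
    p'.2.head_src _ (by rw [List.head?_eq_head hne2]; rfl)
  have hsrc : p.2.source = p'.2.source := by rw [← e1, ← e2, hhead]
  have hν : FPath.Prefix p.2 p'.2 ∨ FPath.Prefix p'.2 p.2 := by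
    rcases hcomp with hc | hc
    · refine Or.inl ⟨hsrc, ?_⟩
      rw [← List.cons_head_tail hne1, ← List.cons_head_tail hne2]
      exact List.cons_prefix_cons.2 ⟨hhead, hc⟩
    · refine Or.inr ⟨hsrc.symm, ?_⟩
      rw [← List.cons_head_tail hne1, ← List.cons_head_tail hne2]
      exact List.cons_prefix_cons.2 ⟨hhead.symm, hc⟩
  have key : ∀ a b : FPath G × FPath G, a ∈ J → b ∈ J → a ≠ b → ¬ FPath.Prefix a.2 b.2 := by
    intro a b haJ hbJ hab hpre
    obtain ⟨x, hx⟩ := cylinder_nonempty hG b.2 (hJ.ne_nil b hbJ)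
    have hdisj := hJ.disj₂ a haJ b hbJ hab
    have : x ∈ cylinder a.2 ∩ cylinder b.2 := ⟨cylinder_mono hpre hx, hx⟩
    rw [hdisj] at this
    exact this
  rcases hν with h | h
  · exact key p p' hp hp' hne h
  · exact key p' p hp' hp (Ne.symm hne) h

/-- slice of a coding-graph path from index `i` to `i+L` -/
private def CGPath.slice (ω : CGPath G J) (i L : ℕ) (h : i + L < ω.verts.length) :
    CGPath G J where
  verts := List.ofFn (fun t : Fin (L + 1) => ω.verts[i + t.val]'(by have := t.isLt; omega))
  ne := by
    apply List.ne_nil_of_length_pos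
    rw [List.length_ofFn]; omega
  mem := by
    intro v hv
    rw [List.mem_ofFn] at hv
    obtain ⟨t, rfl⟩ := hv
    exact ω.mem _ (List.getElem_mem _)
  adj := by
    refine List.isChain_iff_getElem.2 ?_
    intro t ht
    rw [List.length_ofFn] at ht
    simp only [List.get_eq_getElem, List.getElem_ofFn, Fin.val_mk]
    have := List.isChain_iff_getElem.1 ω.adj (i + t) (by omega)
    exact this

private lemma slice_length (ω : CGPath G J) (i L : ℕ) (h : i + L < ω.verts.length) :
    (ω.slice i L h).verts.length = L + 1 := by
  simp [CGPath.slice]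

private lemma slice_getElem (ω : CGPath G J) (i L : ℕ) (h : i + L < ω.verts.length)
    (t : ℕ) (ht : t < L + 1) :
    (ω.slice i L h).verts[t]'(by rw [slice_length]; omega) =
      ω.verts[i + t]'(by omega) := by
  simp only [CGPath.slice, List.getElem_ofFn, Fin.val_mk]

private lemma slice_head (ω : CGPath G J) (i L : ℕ) (h : i + L < ω.verts.length) :
    (ω.slice i L h).verts.head (ω.slice i L h).ne = ω.verts[i]'(by omega) := by
  rw [List.head_eq_getElem]
  have := slice_getElem ω i L h 0 (by omega)
  simpa using this

private lemma slice_getLast (ω : CGPath G J) (i L : ℕ) (h : i + L < ω.verts.length) :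
    (ω.slice i L h).verts.getLast (ω.slice i L h).ne = ω.verts[i + L]'(by omega) := by
  rw [List.getLast_eq_getElem]
  have hl := slice_length ω i L h
  have := slice_getElem ω i L h L (by omega)
  convert this using 2
  omega

private lemma slice_map_label (ω : CGPath G J) (i L : ℕ) (h : i + L < ω.verts.length) :
    (ω.slice i L h).verts.map (fun v => v.2.edges.head?) =
      List.ofFn (fun t : Fin (L + 1) =>
        (ω.verts[i + t.val]'(by have := t.isLt; omega)).2.edges.head?) := by
  have hv : (ω.slice i L h).verts = List.ofFn
      (fun t : Fin (L + 1) => ω.verts[i + t.val]'(by have := t.isLt; omega)) := rfl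
  rw [hv, List.map_ofFn]
  rfl

private lemma elabel_eq_of_map_eq {ω ξ : CGPath G J}
    (h : ω.verts.map (fun v => v.2.edges.head?) = ξ.verts.map (fun v => v.2.edges.head?)) :
    ω.elabel = ξ.elabel := by
  have key : ∀ γ : CGPath G J, γ.elabel =
      List.filterMap id (γ.verts.map (fun v => v.2.edges.head?)) := by
    intro γ
    rw [List.filterMap_map]
    rfl
  rw [key, key, h]

end Helper13

/-- Lemma 5.5: if all edges of `E_J` are non-negative, `E_J` has no
non-positive cycles, and `(E_J, E)` is not left-synchronizing, then there exist two
distinct cycles in `E_J` with the same `E`-label. -/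
theorem not_sync_two_cycles (G : FinGraph) (hG : Standing G)
    (J : Set (FPath G × FPath G)) (hJ : IsUnitaryJ G J)
    (hnn : AllEdgesNonneg G J) (hnc : ¬ HasNonposCycle G J)
    (hns : ¬ ∃ m, LeftSyncDelay G J m) :
    ∃ ω ξ : CGPath G J,
      2 ≤ ω.verts.length ∧ ω.verts.getLast ω.ne = ω.verts.head ω.ne ∧
      2 ≤ ξ.verts.length ∧ ξ.verts.getLast ξ.ne = ξ.verts.head ξ.ne ∧
      ω ≠ ξ ∧ ω.elabel = ξ.elabel := by
  classical
  push_neg at hns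
  set S : Finset (FPath G × FPath G) := hJ.finite.toFinset with hS
  set m : ℕ := (S ×ˢ S).card with hm
  have hfail := hns m
  unfold LeftSyncDelay at hfail
  push_neg at hfail
  obtain ⟨ω, ξ, hlω, hlξ, hel, hhead⟩ := hfail
  have hsome : ∀ γ : CGPath G J, ∀ v ∈ γ.verts,
      (v.2.edges.head?).isSome := by
    intro γ v hv
    rw [List.head?_eq_head (hJ.ne_nil v (γ.mem v hv))]
    rfl
  have hmap : ω.verts.map (fun v => v.2.edges.head?) =
      ξ.verts.map (fun v => v.2.edges.head?) := by
    rw [map_eq_of_forall_isSome _ _ (hsome ω), map_eq_of_forall_isSome _ _ (hsome ξ)]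
    exact congrArg (List.map some) hel
  have hlabpt : ∀ i, (hi : i < m + 1) →
      (ω.verts[i]'(by omega)).2.edges.head? = (ξ.verts[i]'(by omega)).2.edges.head? := by
    intro i hi
    have h := congrArg (fun l => l[i]?) hmap
    simp only [List.getElem?_map] at h
    rw [List.getElem?_eq_getElem (by omega : i < ω.verts.length),
        List.getElem?_eq_getElem (by omega : i < ξ.verts.length)] at h
    simpa using h
  -- differences persist
  have hdiff : ∀ i, (hi : i < m + 1) →
      ω.verts[i]'(by omega) ≠ ξ.verts[i]'(by omega) := by
    intro i
    induction i with
    | zero =>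
      intro hi hEq
      apply hhead
      rw [List.head_eq_getElem ω.ne, List.head_eq_getElem ξ.ne]
      exact hEq
    | succ n ih =>
      intro hi hEq
      refine ih (by omega) ?_
      have hadjω : CGAdj (ω.verts[n]'(by omega)) (ω.verts[n + 1]'(by omega)) := by
        have := List.isChain_iff_getElem.1 ω.adj n (by omega)
        simpa [List.get_eq_getElem] using this
      have hadjξ : CGAdj (ξ.verts[n]'(by omega)) (ω.verts[n + 1]'(by omega)) := by
        have := List.isChain_iff_getElem.1 ξ.adj n (by omega)
        rw [hEq]
        exact this
      exact eq_of_same_label_adj hG hJ hnn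
        (ω.mem _ (List.getElem_mem _)) (ξ.mem _ (List.getElem_mem _))
        (ω.mem _ (List.getElem_mem _)) hadjω hadjξ (hlabpt n (by omega))
  -- the main construction, assuming a repeated pair at i < j
  have main : ∀ i j : ℕ, (hi : i < m + 1) → (hj : j < m + 1) → i < j →
      ω.verts[i]'(by omega) = ω.verts[j]'(by omega) →
      ξ.verts[i]'(by omega) = ξ.verts[j]'(by omega) →
      ∃ ω' ξ' : CGPath G J,
        2 ≤ ω'.verts.length ∧ ω'.verts.getLast ω'.ne = ω'.verts.head ω'.ne ∧
        2 ≤ ξ'.verts.length ∧ ξ'.verts.getLast ξ'.ne = ξ'.verts.head ξ'.ne ∧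
        ω' ≠ ξ' ∧ ω'.elabel = ξ'.elabel := by
    intro i j hi hj hij hωe hξe
    obtain ⟨L, rfl⟩ : ∃ L, j = i + (L + 1) := ⟨j - i - 1, by omega⟩
    have hωlen : i + (L + 1) < ω.verts.length := by omega
    have hξlen : i + (L + 1) < ξ.verts.length := by omega
    refine ⟨ω.slice i (L + 1) hωlen, ξ.slice i (L + 1) hξlen, ?_, ?_, ?_, ?_, ?_, ?_⟩
    · rw [slice_length]; omega
    · rw [slice_getLast, slice_head]; exact hωe.symm
    · rw [slice_length]; omega
    · rw [slice_getLast, slice_head]; exact hξe.symm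
    · intro hEq
      have hkey : (ω.slice i (L + 1) hωlen).verts.head (ω.slice i (L + 1) hωlen).ne =
          (ξ.slice i (L + 1) hξlen).verts.head (ξ.slice i (L + 1) hξlen).ne := by
        rw [hEq]
      rw [slice_head, slice_head] at hkey
      exact hdiff i (by omega) hkey
    · apply elabel_eq_of_map_eq
      rw [slice_map_label, slice_map_label]
      refine congrArg List.ofFn (funext fun t => ?_)
      have := hlabpt (i + t.val) (by have := t.isLt; omega)
      exact this
  obtain ⟨a, -, b, -, hab, hFab⟩ :=
    Finset.exists_ne_map_eq_of_card_lt_of_maps_to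
      (s := (Finset.univ : Finset (Fin (m + 1)))) (t := S ×ˢ S)
      (by rw [Finset.card_univ, Fintype.card_fin]; omega)
      (f := fun a : Fin (m + 1) =>
        ((ω.verts[a.val]'(by have := a.isLt; omega) : FPath G × FPath G),
         (ξ.verts[a.val]'(by have := a.isLt; omega) : FPath G × FPath G)))
      (by
        intro a _
        exact Finset.mem_product.2 ⟨hJ.finite.mem_toFinset.2 (ω.mem _ (List.getElem_mem _)),
          hJ.finite.mem_toFinset.2 (ξ.mem _ (List.getElem_mem _))⟩)
  have hω' := congrArg Prod.fst hFab
  have hξ' := congrArg Prod.snd hFab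
  simp only at hω' hξ'
  rcases hab.lt_or_gt with hlt | hlt
  · exact main a.val b.val a.isLt b.isLt hlt hω' hξ'
  · exact main b.val a.val b.isLt a.isLt hlt hω'.symm hξ'.symm
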